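/- Two-pointer 3SUM correctness: Let a : Fin n → ℤ be a strictly increasing sequence (sorted, distinct values) and let t : ℤ. Define the two-pointer process: start with i = 0 and j = n - 1; while i < j, if a i + a j = t report success; if a i + a j < t increment i; if a i + a j > t decrement j. Then the process reports success if and only if there exist indices i < j with a i + a j = t. Moreover the process terminates in at most n - 1 iterations. -/
import Mathlib


/-- One transition of the two-pointer sweep with target `t` on a sorted array `a`. -/
def tpStep (a : ℕ → ℤ) (t : ℤ) (s : ℕ × ℕ) : ℕ × ℕ :=
  if s.1 < s.2 then
    if a s.1 + a s.2 = t then s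
    else if a s.1 + a s.2 < t then (s.1 + 1, s.2)
    else (s.1, s.2 - 1)
  else s

lemma tpStep_fix (a : ℕ → ℤ) (t : ℤ) :
    ∀ (m : ℕ) (p : ℕ × ℕ), p.2 - p.1 ≤ m →
      tpStep a t ((tpStep a t)^[m] p) = (tpStep a t)^[m] p := by
  intro m
  induction m with
  | zero =>
    intro p hp
    simp only [Function.iterate_zero, id_eq]
    have : ¬ p.1 < p.2 := by omega
    simp [tpStep, this]
  | succ m ih =>
    intro p hp
    by_cases hfix : tpStep a t p = p
    · rw [Function.iterate_fixed hfix, hfix]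
    · rw [Function.iterate_succ_apply]
      apply ih
      by_cases hlt : p.1 < p.2
      · by_cases heq : a p.1 + a p.2 = t
        · exact absurd (by simp [tpStep, hlt, heq]) hfix
        · by_cases hlt2 : a p.1 + a p.2 < t
          · simp only [tpStep, hlt, heq, hlt2, if_true, if_false]; omega
          · simp only [tpStep, hlt, heq, hlt2, if_true, if_false]; omega
      · exact absurd (by simp [tpStep, hlt]) hfix

theorem two_pointer_correct
    (n : ℕ) (hn : 1 ≤ n) (a : ℕ → ℤ)
    (ha : ∀ i j : ℕ, i < j → j < n → a i < a j) (t : ℤ) :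
    ((∃ k : ℕ,
        ((tpStep a t)^[k] (0, n - 1)).1 < ((tpStep a t)^[k] (0, n - 1)).2 ∧
        a ((tpStep a t)^[k] (0, n - 1)).1 + a ((tpStep a t)^[k] (0, n - 1)).2 = t) ↔
      ∃ i j : ℕ, i < j ∧ j < n ∧ a i + a j = t) ∧
    (tpStep a t)^[n] (0, n - 1) = (tpStep a t)^[n - 1] (0, n - 1) := by
  set f := tpStep a t with hf
  -- bounds invariant
  have hinv : ∀ k, (f^[k] (0, n-1)).1 ≤ (f^[k] (0, n-1)).2 ∧ (f^[k] (0, n-1)).2 ≤ n-1 := by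
    intro k
    induction k with
    | zero => simp
    | succ k ih =>
      rw [Function.iterate_succ_apply']
      obtain ⟨h1, h2⟩ := ih
      set s := f^[k] (0, n-1) with hs
      by_cases hlt : s.1 < s.2
      · by_cases heq : a s.1 + a s.2 = t
        · simpa [hf, tpStep, hlt, heq] using ⟨h1, h2⟩
        · by_cases hlt2 : a s.1 + a s.2 < t
          · simp only [hf, tpStep, hlt, heq, hlt2, if_true, if_false]; constructor <;> omega
          · simp only [hf, tpStep, hlt, heq, hlt2, if_true, if_false]; constructor <;> omega
      · simpa [hf, tpStep, hlt] using ⟨h1, h2⟩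
  have hfix : f (f^[n-1] (0, n-1)) = f^[n-1] (0, n-1) :=
    tpStep_fix a t (n-1) (0, n-1) (by simp)
  constructor
  · constructor
    · rintro ⟨k, hk1, hk2⟩
      exact ⟨_, _, hk1, lt_of_le_of_lt (hinv k).2 (by omega), hk2⟩
    · rintro ⟨i, j, hij, hjn, hsum⟩
      -- invariant: success or pointers bracket (i, j)
      have key : ∀ k, (∃ m : ℕ,
            (f^[m] (0, n - 1)).1 < (f^[m] (0, n - 1)).2 ∧
            a (f^[m] (0, n - 1)).1 + a (f^[m] (0, n - 1)).2 = t) ∨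
          ((f^[k] (0, n-1)).1 ≤ i ∧ j ≤ (f^[k] (0, n-1)).2) := by
        intro k
        induction k with
        | zero => right; simp; omega
        | succ k ih =>
          rcases ih with h | ⟨hqi, hqj⟩
          · exact Or.inl h
          · rw [Function.iterate_succ_apply']
            set s := f^[k] (0, n-1) with hs
            have hlt : s.1 < s.2 := by omega
            by_cases heq : a s.1 + a s.2 = t
            · exact Or.inl ⟨k, hlt, heq⟩
            · have hjle : a j ≤ a s.2 := by
                rcases eq_or_lt_of_le hqj with h | h
                · rw [h]
                · exact le_of_lt (ha j s.2 h (by have := (hinv k).2; rw [← hs] at this; omega))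
              have hile : a s.1 ≤ a i := by
                rcases eq_or_lt_of_le hqi with h | h
                · rw [h]
                · exact le_of_lt (ha s.1 i h (by omega))
              by_cases hlt2 : a s.1 + a s.2 < t
              · -- then s.1 < i
                have : s.1 ≠ i := by
                  intro h
                  rw [h] at hlt2
                  omega
                right
                simp only [hf, tpStep, hlt, heq, hlt2, if_true, if_false]
                constructor <;> [omega; exact hqj]
              · have : s.2 ≠ j := by
                  intro h
                  rw [h] at hlt2 heq
                  omega
                right
                simp only [hf, tpStep, hlt, heq, hlt2, if_true, if_false]
                constructor <;> [exact hqi; omega]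
      rcases key (n-1) with h | ⟨hqi, hqj⟩
      · exact h
      · set s := f^[n-1] (0, n-1) with hs
        have hlt : s.1 < s.2 := by omega
        by_cases heq : a s.1 + a s.2 = t
        · exact ⟨n-1, hlt, heq⟩
        · exfalso
          by_cases hlt2 : a s.1 + a s.2 < t
          · have := hfix
            simp only [hf, tpStep, hlt, heq, hlt2, if_true, if_false] at this
            have := congrArg Prod.fst this
            simp at this
          · have := hfix
            simp only [hf, tpStep, hlt, heq, hlt2, if_true, if_false] at this
            have := congrArg Prod.snd this
            simp at this
            omega
  · have h1 : f^[n] (0, n-1) = f^[(n-1)+1] (0, n-1) := by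
      rw [show (n-1)+1 = n from by omega]
    rw [h1, Function.iterate_succ_apply', hfix]
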